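/- Let ρ be an endomorphism of B(H) for a separable infinite-dimensional Hilbert space H, i.e. a normal unital *-homomorphism B(H) → B(H). Then ρ is inner in the sense that there exists a (finite or countable) family of isometries v_i ∈ B(H) with mutually orthogonal ranges satisfying Σ_i v_i v_i* = 1 such that ρ(x) = Σ_i v_i x v_i* for all x ∈ B(H). -/

import Mathlib

set_option maxHeartbeats 2000000

open scoped InnerProductSpace

section Aux

variable {E : Type*} [NormedAddCommGroup E] [InnerProductSpace ℂ E]

/-- An orthonormal set in a separable space is countable. -/
lemma aux_orthonormal_countable [TopologicalSpace.SeparableSpace E] {w : Set E}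
    (h : Orthonormal ℂ ((↑) : w → E)) : w.Countable := by
  have hd : Pairwise (Function.onFun Disjoint (fun x : w => Metric.ball (x : E) (Real.sqrt 2 / 2))) := by
    intro x y hxy
    have hne : (x : E) ≠ (y : E) := Subtype.coe_ne_coe.mpr hxy
    have hdist : dist (x : E) (y : E) = Real.sqrt 2 := by
      rw [dist_eq_norm]
      have hxy0 : ⟪(x : E), (y : E)⟫_ℂ = 0 := by
        classical
        have h0 := orthonormal_iff_ite.mp h x y
        rwa [if_neg hxy] at h0
      have h2 : ‖(x : E) - (y : E)‖ ^ 2 = 2 := by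
        rw [norm_sub_sq (𝕜 := ℂ) (x : E) (y : E), h.1 x, h.1 y, hxy0]
        norm_num
      have := congrArg Real.sqrt h2
      rwa [Real.sqrt_sq (norm_nonneg _)] at this
    apply Metric.ball_disjoint_ball
    rw [hdist]; ring_nf; exact le_refl _
  have : Countable w := hd.countable_of_isOpen_disjoint (fun _ => Metric.isOpen_ball)
    (fun i => Metric.nonempty_ball.mpr (by positivity))
  exact Set.countable_coe_iff.mp this

end Aux

abbrev ContinuousLinearMap.toWOT (𝕜 : Type*) (E F : Type*) [RCLike 𝕜] [NormedAddCommGroup E]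
    [NormedSpace 𝕜 E] [NormedAddCommGroup F] [NormedSpace 𝕜 F] :
    (E →L[𝕜] F) ≃ₗ[𝕜] ContinuousLinearMapWOT (RingHom.id 𝕜) E F :=
  (ContinuousLinearMapWOT.linearEquiv (E := E) (F := F) (σ := RingHom.id 𝕜) 𝕜).symm

lemma ContinuousLinearMap.toWOT_apply' {𝕜 : Type*} {E F : Type*} [RCLike 𝕜] [NormedAddCommGroup E]
    [NormedSpace 𝕜 E] [NormedAddCommGroup F] [NormedSpace 𝕜 F] {A : E →L[𝕜] F} {x : E} :
    (ContinuousLinearMap.toWOT 𝕜 E F A) x = A x := rfl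

/-- Every normal unital *-endomorphism of `B(H)`, for `H` a separable infinite-dimensional
Hilbert space, is inner: it is of the form `ρ(x) = Σ_i v_i x v_i*` for a countable family of
isometries `v_i` with mutually orthogonal ranges and `Σ_i v_i v_i* = 1` (sums in the strong
operator topology). Normality is encoded as continuity, with respect to the weak operator
topology, on the closed unit ball. -/
theorem endomorphism_of_BH_is_inner {H : Type*} [NormedAddCommGroup H]
    [InnerProductSpace ℂ H] [CompleteSpace H] [TopologicalSpace.SeparableSpace H]
    (hinf : ¬ FiniteDimensional ℂ H)
    (ρ : (H →L[ℂ] H) →⋆ₐ[ℂ] (H →L[ℂ] H))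
    (hnormal : ContinuousOn
      (fun x : ContinuousLinearMapWOT (RingHom.id ℂ) H H =>
        (ContinuousLinearMapWOT.linearEquiv (E := H) (F := H) (σ := RingHom.id ℂ) ℂ).symm (ρ (((ContinuousLinearMapWOT.linearEquiv (E := H) (F := H) (σ := RingHom.id ℂ) ℂ).symm).symm x)))
      {x : ContinuousLinearMapWOT (RingHom.id ℂ) H H | ‖((ContinuousLinearMapWOT.linearEquiv (E := H) (F := H) (σ := RingHom.id ℂ) ℂ).symm).symm x‖ ≤ 1}) :
    ∃ (ι : Type) (_ : Countable ι) (v : ι → H →L[ℂ] H),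
      (∀ i, star (v i) * v i = 1) ∧
      (∀ i j, i ≠ j → star (v i) * v j = 0) ∧
      (∀ ξ : H, HasSum (fun i => v i (star (v i) ξ)) ξ) ∧
      (∀ (x : H →L[ℂ] H) (ξ : H), HasSum (fun i => v i (x (star (v i) ξ))) (ρ x ξ)) := by
  classical
  -- H is nontrivial
  have hnt : Nontrivial H := by
    by_contra hn
    have : Subsingleton H := not_nontrivial_iff_subsingleton.mp hn
    exact hinf inferInstance
  obtain ⟨w, b, hb⟩ := exists_hilbertBasis ℂ H
  -- w is nonempty
  have hwne : w.Nonempty := by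
    by_contra hw
    rw [Set.not_nonempty_iff_eq_empty] at hw
    have hsub : Subsingleton H := by
      refine subsingleton_of_forall_eq 0 fun x => ?_
      haveI : IsEmpty ↥w := by rw [hw]; infer_instance
      exact (b.hasSum_repr x).unique hasSum_empty
    exact hinf inferInstance
  obtain ⟨e1, he1w⟩ := hwne
  have hbj : ∀ j : ↥w, b j = (j : H) := fun j => congrFun hb j
  have he1 : ‖e1‖ = 1 := by
    have h := b.orthonormal.1 ⟨e1, he1w⟩
    rwa [hbj ⟨e1, he1w⟩] at h
  have he1i : ⟪e1, e1⟫_ℂ = 1 := by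
    rw [inner_self_eq_norm_sq_to_K, he1]; norm_num
  -- rank one operators
  set u : H → (H →L[ℂ] H) := fun ξ => (innerSL ℂ e1).smulRight ξ with hu
  have hu_apply : ∀ ξ η, u ξ η = ⟪e1, η⟫_ℂ • ξ := fun ξ η => rfl
  set p : H →L[ℂ] H := u e1 with hp
  have hu_star : ∀ ξ, star (u ξ) = (innerSL ℂ ξ).smulRight e1 := by
    intro ξ
    rw [ContinuousLinearMap.star_eq_adjoint]
    refine ((ContinuousLinearMap.eq_adjoint_iff _ _).mpr ?_).symm
    intro x y
    simp [hu_apply, inner_smul_left, inner_smul_right, mul_comm]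
  have hstar_apply : ∀ ξ η, star (u ξ) η = ⟪ξ, η⟫_ℂ • e1 := fun ξ η => by
    rw [hu_star]; rfl
  have hmul_u : ∀ ξ η, star (u ξ) * u η = ⟪ξ, η⟫_ℂ • p := by
    intro ξ η; ext χ
    simp [ContinuousLinearMap.mul_apply, hu_apply, hstar_apply, inner_smul_right, smul_smul, mul_comm, hp]
  have hx_u : ∀ (x : H →L[ℂ] H) ξ, x * u ξ = u (x ξ) := by
    intro x ξ; ext χ
    simp [ContinuousLinearMap.mul_apply, hu_apply]
  have hp_star_u : ∀ η, p * star (u η) = star (u η) := by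
    intro η; ext χ
    simp [ContinuousLinearMap.mul_apply, hu_apply, hstar_apply, inner_smul_right, he1i, hp, he1]
  have hu_u_star : ∀ η, u η * star (u η) = (innerSL ℂ η).smulRight η := by
    intro η; ext χ
    simp [ContinuousLinearMap.mul_apply, hu_apply, hstar_apply, inner_smul_right, he1i, smul_smul, mul_comm, he1]
  have hp_selfadj : star p = p := by rw [hp, hu_star e1]
  have hpp : p * p = p := by
    have h1 := hmul_u e1 e1
    rw [he1i, one_smul] at h1
    nth_rewrite 1 [← hp_selfadj]
    exact h1
  have hq_mul : ρ p * ρ p = ρ p := by rw [← map_mul, hpp]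
  have hq_star : star (ρ p) = ρ p := by rw [← map_star, hp_selfadj]
  -- the range of the projection ρ p
  set K : Submodule ℂ H := LinearMap.ker ((1 - ρ p : H →L[ℂ] H) : H →ₗ[ℂ] H) with hK
  have hKclosed : IsClosed (K : Set H) := ContinuousLinearMap.isClosed_ker (1 - ρ p)
  have hmemK : ∀ χ, χ ∈ K ↔ ρ p χ = χ := by
    intro χ
    rw [hK, LinearMap.mem_ker]
    rw [ContinuousLinearMap.coe_coe, ContinuousLinearMap.sub_apply, ContinuousLinearMap.one_apply, sub_eq_zero, eq_comm]
  have hqK : ∀ χ, ρ p χ ∈ K := fun χ => (hmemK _).mpr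
    (by rw [← ContinuousLinearMap.mul_apply, hq_mul])
  have hKorth : ∀ χ, (∀ k ∈ K, ⟪k, χ⟫_ℂ = 0) → ρ p χ = 0 := by
    intro χ hχ
    have h1 : ⟪ρ p χ, ρ p χ⟫_ℂ = 0 := by
      have ha : ⟪ρ p χ, ρ p χ⟫_ℂ
          = ⟪ContinuousLinearMap.adjoint (ρ p) (ρ p χ), χ⟫_ℂ := by
        rw [ContinuousLinearMap.adjoint_inner_left]
      rw [ha, ← ContinuousLinearMap.star_eq_adjoint, hq_star]
      exact hχ _ (hqK _)
    exact inner_self_eq_zero.mp h1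
  haveI : CompleteSpace K := hKclosed.completeSpace_coe
  haveI : SecondCountableTopology H := UniformSpace.secondCountable_of_separable H
  obtain ⟨w', f, hf⟩ := exists_hilbertBasis ℂ K
  have hw'count : w'.Countable := aux_orthonormal_countable (by rw [← hf]; exact f.orthonormal)
  haveI : Countable ↥w' := hw'count.to_subtype
  -- the orthonormal family in H spanning the range of ρ p
  set F : w' → H := fun j => ((j : K) : H) with hFdef
  have hFK : ∀ j, ρ p (F j) = F j := fun j => (hmemK _).mp (j : K).2
  have hfo : Orthonormal ℂ (fun j : ↥w' => (j : ↥K)) := hf ▸ f.orthonormal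
  have hFortho : ∀ j k : w', ⟪F j, F k⟫_ℂ = if j = k then 1 else 0 := by
    intro j k
    have h1 := orthonormal_iff_ite.mp hfo j k
    rw [hFdef, ← Submodule.coe_inner]
    exact h1
  -- the master inner product computation
  have hmaster : ∀ (j k : w') (ξ η : H),
      ⟪ρ (u ξ) (F j), ρ (u η) (F k)⟫_ℂ = (if j = k then 1 else 0) * ⟪ξ, η⟫_ℂ := by
    intro j k ξ η
    rw [← ContinuousLinearMap.adjoint_inner_right, ← ContinuousLinearMap.star_eq_adjoint,
      ← map_star, ← ContinuousLinearMap.mul_apply, ← map_mul, hmul_u, map_smul,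
      ContinuousLinearMap.smul_apply, inner_smul_right, hFK k, hFortho j k]
    ring
  -- the isometries
  have hulin_add : ∀ ξ ξ', u (ξ + ξ') = u ξ + u ξ' := by
    intro ξ ξ'; ext χ
    rw [ContinuousLinearMap.add_apply, hu_apply, hu_apply, hu_apply, smul_add]
  have hulin_smul : ∀ (c : ℂ) ξ, u (c • ξ) = c • u ξ := by
    intro c ξ; ext χ
    rw [ContinuousLinearMap.smul_apply, hu_apply, hu_apply, smul_comm]
  set Vlin : w' → (H →ₗ[ℂ] H) := fun j =>
    { toFun := fun ξ => ρ (u ξ) (F j)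
      map_add' := by
        intro ξ ξ'
        show ρ (u (ξ + ξ')) (F j) = ρ (u ξ) (F j) + ρ (u ξ') (F j)
        rw [hulin_add, map_add, ContinuousLinearMap.add_apply]
      map_smul' := by
        intro c ξ
        show ρ (u (c • ξ)) (F j) = c • ρ (u ξ) (F j)
        rw [hulin_smul, map_smul, ContinuousLinearMap.smul_apply] } with hVlin
  have hVnorm : ∀ j ξ, ‖Vlin j ξ‖ = ‖ξ‖ := by
    intro j ξ
    have h1 := hmaster j j ξ ξ
    rw [if_pos rfl, one_mul] at h1
    have h1' : ⟪Vlin j ξ, Vlin j ξ⟫_ℂ = ⟪ξ, ξ⟫_ℂ := h1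
    have h3 : ‖Vlin j ξ‖ ^ 2 = ‖ξ‖ ^ 2 := by
      rw [← inner_self_eq_norm_sq (𝕜 := ℂ) (Vlin j ξ), ← inner_self_eq_norm_sq (𝕜 := ℂ) ξ, h1']
    nlinarith [norm_nonneg (Vlin j ξ), norm_nonneg ξ]
  set V : w' → (H →L[ℂ] H) := fun j =>
    LinearMap.mkContinuous (Vlin j) 1 (fun ξ => by rw [hVnorm, one_mul]) with hV
  have hV_apply : ∀ j ξ, V j ξ = ρ (u ξ) (F j) := fun j ξ => rfl
  have hVinner : ∀ (j k : w') ξ η,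
      ⟪V j ξ, V k η⟫_ℂ = (if j = k then 1 else 0) * ⟪ξ, η⟫_ℂ := fun j k ξ η =>
    hmaster j k ξ η
  have hVstar : ∀ (j k : w'),
      star (V j) * V k = if j = k then (1 : H →L[ℂ] H) else 0 := by
    intro j k
    ext η
    apply ext_inner_left ℂ
    intro ξ
    rw [ContinuousLinearMap.mul_apply, ContinuousLinearMap.star_eq_adjoint,
      ContinuousLinearMap.adjoint_inner_right, hVinner]
    by_cases h : j = k <;> simp [h]
  have hIntertwine : ∀ (x : H →L[ℂ] H) (j : w') ξ, ρ x (V j ξ) = V j (x ξ) := by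
    intro x j ξ
    rw [hV_apply, hV_apply, ← ContinuousLinearMap.mul_apply, ← map_mul, hx_u]
  have hVadj : ∀ (j : w') (χ ξ : H), ⟪χ, star (V j) ξ⟫_ℂ = ⟪V j χ, ξ⟫_ℂ := by
    intro j χ ξ
    rw [ContinuousLinearMap.star_eq_adjoint, ContinuousLinearMap.adjoint_inner_right]
  -- the big orthonormal family
  set G : w' × w → H := fun jn => V jn.1 (b jn.2) with hG
  have hGortho : Orthonormal ℂ G := by
    rw [orthonormal_iff_ite]
    rintro ⟨j, n⟩ ⟨k, m⟩
    have hbo := orthonormal_iff_ite.mp b.orthonormal n m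
    show ⟪V j (b n), V k (b m)⟫_ℂ = _
    rw [hVinner, hbo]
    by_cases h1 : j = k <;> by_cases h2 : n = m <;> simp [h1, h2, Prod.ext_iff]
  -- completeness of the big orthonormal family (this uses normality)
  have hsp : (Submodule.span ℂ (Set.range G))ᗮ = ⊥ := by
    rw [Submodule.eq_bot_iff]
    intro ξ hξ
    have h0 : ∀ (j : w') (n : w), ⟪G (j, n), ξ⟫_ℂ = 0 := fun j n =>
      (Submodule.mem_orthogonal _ ξ).mp hξ (G (j, n))
        (Submodule.subset_span (Set.mem_range_self _))
    -- all the adjoints of the isometries kill ξ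
    have hz : ∀ j : w', star (V j) ξ = 0 := by
      intro j
      have hb1 := b.hasSum_repr (star (V j) ξ)
      have heq : (fun n : w => b.repr (star (V j) ξ) n • b n) = fun _ => (0 : H) := by
        funext n
        rw [b.repr_apply_apply, hVadj]
        have h00 : ⟪V j (b n), ξ⟫_ℂ = 0 := h0 j n
        rw [h00, zero_smul]
      rw [heq] at hb1
      exact (hb1.unique hasSum_zero)
    -- hence ρ applied to adjoints of the rank-one operators kills ξ
    have hz2 : ∀ η : H, ρ (star (u η)) ξ = 0 := by
      intro η
      have hKperp : ∀ k ∈ K, ⟪k, ρ (star (u η)) ξ⟫_ℂ = 0 := by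
        intro k hk
        have hFinner : ∀ j : w', ⟪ρ (star (u η)) ξ, F j⟫_ℂ = 0 := by
          intro j
          rw [← inner_conj_symm]
          have h1 : ⟪F j, ρ (star (u η)) ξ⟫_ℂ = ⟪ρ (u η) (F j), ξ⟫_ℂ := by
            rw [map_star, ContinuousLinearMap.star_eq_adjoint,
              ContinuousLinearMap.adjoint_inner_right]
          rw [h1, ← hV_apply, ← hVadj, hz j, inner_zero_right, map_zero]
        have hk2 := (f.hasSum_repr ⟨k, hk⟩).mapL K.subtypeL
        have hk3 := hk2.mapL (innerSL ℂ (ρ (star (u η)) ξ))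
        have hterm : (fun j : w' => (innerSL ℂ (ρ (star (u η)) ξ))
            (K.subtypeL (f.repr ⟨k, hk⟩ j • f j))) = fun _ => (0 : ℂ) := by
          funext j
          rw [map_smul, map_smul]
          have hcoe : (K.subtypeL (f j) : H) = F j := by
            rw [show f j = (j : ↥K) from congrFun hf j]; rfl
          rw [hcoe]
          have : (innerSL ℂ (ρ (star (u η)) ξ)) (F j) = 0 := hFinner j
          rw [this, smul_zero]
        rw [hterm] at hk3
        have hval : ⟪ρ (star (u η)) ξ, k⟫_ℂ = 0 := hk3.unique hasSum_zero
        rw [← inner_conj_symm, hval, map_zero]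
      have h2 := hKorth _ hKperp
      have h3 : ρ p * ρ (star (u η)) = ρ (star (u η)) := by
        rw [← map_mul, hp_star_u]
      calc ρ (star (u η)) ξ = (ρ p * ρ (star (u η))) ξ := by rw [h3]
        _ = ρ p (ρ (star (u η)) ξ) := rfl
        _ = 0 := h2
    -- hence ρ applied to the rank-one projections kills ξ
    have hz3 : ∀ η : H, ρ ((innerSL ℂ η).smulRight η) ξ = 0 := by
      intro η
      rw [← hu_u_star, map_mul, ContinuousLinearMap.mul_apply, hz2, map_zero]
    -- partial sums of the rank-one projections
    set T : Finset ↥w → (H →L[ℂ] H) :=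
      fun s => ∑ n ∈ s, (innerSL ℂ (b n)).smulRight (b n) with hT
    have hTz : ∀ s, ρ (T s) ξ = 0 := by
      intro s
      rw [hT, map_sum, ContinuousLinearMap.sum_apply]
      exact Finset.sum_eq_zero fun n _ => hz3 (b n)
    have hTapp : ∀ s χ, T s χ = ∑ n ∈ s, b.repr χ n • b n := by
      intro s χ
      rw [hT, ContinuousLinearMap.sum_apply]
      refine Finset.sum_congr rfl fun n _ => ?_
      rw [b.repr_apply_apply]
      rfl
    have hTnorm : ∀ s, ‖T s‖ ≤ 1 := by
      intro s
      refine ContinuousLinearMap.opNorm_le_bound _ zero_le_one fun χ => ?_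
      rw [one_mul]
      have hTχ : T s χ = ∑ n ∈ s, ⟪b n, χ⟫_ℂ • b n := by
        rw [hTapp]
        exact Finset.sum_congr rfl fun n _ => by rw [b.repr_apply_apply]
      have hinner := b.orthonormal.inner_sum (fun n => ⟪b n, χ⟫_ℂ) (fun n => ⟪b n, χ⟫_ℂ) s
      have hns : ‖T s χ‖ ^ 2 = ∑ n ∈ s, ‖⟪b n, χ⟫_ℂ‖ ^ 2 := by
        have h1 : ⟪T s χ, T s χ⟫_ℂ = ∑ n ∈ s, (‖⟪b n, χ⟫_ℂ‖ : ℂ) ^ 2 := by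
          rw [hTχ, hinner]
          exact Finset.sum_congr rfl fun n _ => RCLike.conj_mul _
        have h2 := inner_self_eq_norm_sq (𝕜 := ℂ) (T s χ)
        rw [h1] at h2
        have h3 : (∑ n ∈ s, (‖⟪b n, χ⟫_ℂ‖ : ℂ) ^ 2)
            = ((∑ n ∈ s, ‖⟪b n, χ⟫_ℂ‖ ^ 2 : ℝ) : ℂ) := by
          push_cast
          ring
        rw [h3] at h2
        rw [← h2]
        simp [← Complex.ofReal_pow]
      have hbessel := b.orthonormal.sum_inner_products_le (s := s) χ
      nlinarith [norm_nonneg (T s χ), norm_nonneg χ]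
    -- the partial sums tend to 1 in the weak operator topology
    have hW1 : Filter.Tendsto (fun s => ContinuousLinearMap.toWOT ℂ H H (T s))
        Filter.atTop (nhds (ContinuousLinearMap.toWOT ℂ H H 1)) := by
      rw [ContinuousLinearMapWOT.tendsto_iff_forall_dual_apply_tendsto]
      intro χ y
      have hb1 := (b.hasSum_repr χ).mapL y
      have he : (fun s : Finset ↥w => y ((ContinuousLinearMap.toWOT ℂ H H (T s)) χ))
          = fun s => ∑ n ∈ s, y (b.repr χ n • b n) := by
        funext s
        rw [ContinuousLinearMap.toWOT_apply', hTapp, map_sum]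
      have hgoal : y ((ContinuousLinearMap.toWOT ℂ H H (1 : H →L[ℂ] H)) χ) = y χ := by
        rw [ContinuousLinearMap.toWOT_apply', ContinuousLinearMap.one_apply]
      rw [he, hgoal]
      exact hb1
    have hmem : ∀ s : Finset ↥w, ContinuousLinearMap.toWOT ℂ H H (T s)
        ∈ {x : ContinuousLinearMapWOT (RingHom.id ℂ) H H |
            ‖(ContinuousLinearMap.toWOT ℂ H H).symm x‖ ≤ 1} := by
      intro s
      have hsy : (ContinuousLinearMap.toWOT ℂ H H).symm
          (ContinuousLinearMap.toWOT ℂ H H (T s)) = T s :=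
        (ContinuousLinearMap.toWOT ℂ H H).symm_apply_apply (T s)
      simp only [Set.mem_setOf_eq, hsy]
      exact hTnorm s
    have h1mem : ContinuousLinearMap.toWOT ℂ H H (1 : H →L[ℂ] H)
        ∈ {x : ContinuousLinearMapWOT (RingHom.id ℂ) H H |
            ‖(ContinuousLinearMap.toWOT ℂ H H).symm x‖ ≤ 1} := by
      have hsy : (ContinuousLinearMap.toWOT ℂ H H).symm
          (ContinuousLinearMap.toWOT ℂ H H (1 : H →L[ℂ] H)) = 1 :=
        (ContinuousLinearMap.toWOT ℂ H H).symm_apply_apply _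
      simp only [Set.mem_setOf_eq, hsy]
      exact ContinuousLinearMap.norm_id_le
    have hW2 : Filter.Tendsto (fun s => ContinuousLinearMap.toWOT ℂ H H (T s))
        Filter.atTop (nhdsWithin (ContinuousLinearMap.toWOT ℂ H H 1)
          {x : ContinuousLinearMapWOT (RingHom.id ℂ) H H |
            ‖(ContinuousLinearMap.toWOT ℂ H H).symm x‖ ≤ 1}) :=
      tendsto_nhdsWithin_iff.mpr ⟨hW1, Filter.Eventually.of_forall hmem⟩
    have hW3 := ((hnormal _ h1mem).tendsto).comp hW2
    have hfun : ((fun x : ContinuousLinearMapWOT (RingHom.id ℂ) H H =>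
          ContinuousLinearMap.toWOT ℂ H H (ρ ((ContinuousLinearMap.toWOT ℂ H H).symm x)))
            ∘ fun s => ContinuousLinearMap.toWOT ℂ H H (T s))
        = fun s : Finset ↥w => ContinuousLinearMap.toWOT ℂ H H (ρ (T s)) := by
      funext s
      rw [Function.comp_apply, (ContinuousLinearMap.toWOT ℂ H H).symm_apply_apply]
    have hlim : ContinuousLinearMap.toWOT ℂ H H
        (ρ ((ContinuousLinearMap.toWOT ℂ H H).symm
          (ContinuousLinearMap.toWOT ℂ H H (1 : H →L[ℂ] H))))
        = ContinuousLinearMap.toWOT ℂ H H (1 : H →L[ℂ] H) := by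
      rw [(ContinuousLinearMap.toWOT ℂ H H).symm_apply_apply, map_one]
    rw [hfun, hlim] at hW3
    rw [ContinuousLinearMapWOT.tendsto_iff_forall_dual_apply_tendsto] at hW3
    have hW4 := hW3 ξ (innerSL ℂ ξ)
    have hconst : (fun s : Finset ↥w =>
        (innerSL ℂ ξ) ((ContinuousLinearMap.toWOT ℂ H H (ρ (T s))) ξ)) = fun _ => (0 : ℂ) := by
      funext s
      rw [ContinuousLinearMap.toWOT_apply', hTz s, map_zero]
    have hlim2 : (innerSL ℂ ξ) ((ContinuousLinearMap.toWOT ℂ H H (1 : H →L[ℂ] H)) ξ)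
        = ⟪ξ, ξ⟫_ℂ := by
      rw [ContinuousLinearMap.toWOT_apply', ContinuousLinearMap.one_apply]
      rfl
    rw [hconst, hlim2] at hW4
    have hfin : (0 : ℂ) = ⟪ξ, ξ⟫_ℂ := tendsto_nhds_unique tendsto_const_nhds hW4
    exact inner_self_eq_zero.mp hfin.symm
  set GB : HilbertBasis (w' × w) ℂ H := HilbertBasis.mkOfOrthogonalEqBot hGortho hsp with hGB
  have hGBcoe : ⇑GB = G := HilbertBasis.coe_mkOfOrthogonalEqBot hGortho hsp
  -- the sum decomposition of the identity
  have hsum3 : ∀ ξ : H, HasSum (fun j : w' => V j (star (V j) ξ)) ξ := by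
    intro ξ
    have h := GB.hasSum_repr ξ
    have hterm : (fun jn : w' × w => GB.repr ξ jn • GB jn)
        = fun jn => ⟪G jn, ξ⟫_ℂ • G jn := by
      funext jn; rw [GB.repr_apply_apply, hGBcoe]
    rw [hterm] at h
    refine h.prod_fiberwise fun j => ?_
    have hb1 := b.hasSum_repr (star (V j) ξ)
    have hb2 := hb1.mapL (V j)
    have heq : (fun n : w => ⟪G (j, n), ξ⟫_ℂ • G (j, n))
        = fun n => V j (b.repr (star (V j) ξ) n • b n) := by
      funext n
      rw [map_smul, b.repr_apply_apply, hVadj]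
    rw [heq]
    exact hb2
  have hsum4 : ∀ (x : H →L[ℂ] H) ξ,
      HasSum (fun j : w' => V j (x (star (V j) ξ))) (ρ x ξ) := by
    intro x ξ
    have h := (hsum3 ξ).mapL (ρ x)
    have heq : (fun j : w' => ρ x (V j (star (V j) ξ)))
        = fun j => V j (x (star (V j) ξ)) := funext fun j => hIntertwine x j _
    rwa [heq] at h
  -- reindex by a subset of ℕ
  obtain ⟨inj, hinj⟩ := Countable.exists_injective_nat ↥w'
  let eqv : ↥w' ≃ Set.range inj := Equiv.ofInjective inj hinj
  refine ⟨↥(Set.range inj), inferInstance, fun i => V (eqv.symm i), ?_, ?_, ?_, ?_⟩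
  · intro i
    have h := hVstar (eqv.symm i) (eqv.symm i)
    rwa [if_pos rfl] at h
  · intro i j hij
    have h := hVstar (eqv.symm i) (eqv.symm j)
    rwa [if_neg (fun hc => hij (eqv.symm.injective hc))] at h
  · intro ξ
    exact (Equiv.hasSum_iff (f := fun j : ↥w' => V j (star (V j) ξ)) (a := ξ)
      eqv.symm).mpr (hsum3 ξ)
  · intro x ξ
    exact (Equiv.hasSum_iff (f := fun j : ↥w' => V j (x (star (V j) ξ))) (a := ρ x ξ)
      eqv.symm).mpr (hsum4 x ξ)
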